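/- Let Ω ⊂ (0,∞)×ℝ be a measurable set and Ω̂ := {(x,y,z) ∈ ℝ³ : (√(x²+y²), z) ∈ Ω} its solid of revolution. Let v = (v_r,v_z) be a C¹ vector field on (0,∞)×ℝ and q : (0,∞)×ℝ → ℝ measurable such that (r,z) ↦ |q(r,z)|·| ∂_r( r v_r ) + ∂_z( r v_z ) |(r,z) is Lebesgue-integrable on Ω. Define q̂(x,y,z) := q(√(x²+y²), z). Then ∫_{Ω̂} q̂ · div v̂ dx dy dz = 2π · ∫_Ω q · ( ∂_r( r v_r ) + ∂_z( r v_z ) ) dr dz, i.e. the three-dimensional form ∫ q̂ div v̂ equals 2π times the axisymmetric form b(q,v) = ∫_Ω q · div( r v ) dr dz. -/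

import Mathlib

open MeasureTheory

noncomputable section

/-- Partial derivatives of scalar functions on `ℝ²`. -/
def pdr (f : ℝ × ℝ → ℝ) (p : ℝ × ℝ) : ℝ := fderiv ℝ f p (1, 0)
def pdz (f : ℝ × ℝ → ℝ) (p : ℝ × ℝ) : ℝ := fderiv ℝ f p (0, 1)

/-- Partial derivatives of scalar functions on `ℝ³ = ℝ × ℝ × ℝ`. -/
def pdx3 (f : ℝ × ℝ × ℝ → ℝ) (q : ℝ × ℝ × ℝ) : ℝ := fderiv ℝ f q (1, 0, 0)
def pdy3 (f : ℝ × ℝ × ℝ → ℝ) (q : ℝ × ℝ × ℝ) : ℝ := fderiv ℝ f q (0, 1, 0)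
def pdz3 (f : ℝ × ℝ × ℝ → ℝ) (q : ℝ × ℝ × ℝ) : ℝ := fderiv ℝ f q (0, 0, 1)

/-- The divergence of a vector field on `ℝ³`. -/
def div3 (F : ℝ × ℝ × ℝ → ℝ × ℝ × ℝ) (q : ℝ × ℝ × ℝ) : ℝ :=
  pdx3 (fun s => (F s).1) q + pdy3 (fun s => (F s).2.1) q + pdz3 (fun s => (F s).2.2) q

/-- The revolved vector field `v̂` on `ℝ³` associated with the meridian field `(v_r, v_z)`. -/
def revolve (vr vz : ℝ × ℝ → ℝ) (q : ℝ × ℝ × ℝ) : ℝ × ℝ × ℝ :=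
  (vr (Real.sqrt (q.1 ^ 2 + q.2.1 ^ 2), q.2.2) * q.1 / Real.sqrt (q.1 ^ 2 + q.2.1 ^ 2),
   vr (Real.sqrt (q.1 ^ 2 + q.2.1 ^ 2), q.2.2) * q.2.1 / Real.sqrt (q.1 ^ 2 + q.2.1 ^ 2),
   vz (Real.sqrt (q.1 ^ 2 + q.2.1 ^ 2), q.2.2))

/-- The solid of revolution of a meridian set `Ω ⊆ (0,∞) × ℝ`. -/
def solidRev (Ω : Set (ℝ × ℝ)) : Set (ℝ × ℝ × ℝ) :=
  {q : ℝ × ℝ × ℝ | (Real.sqrt (q.1 ^ 2 + q.2.1 ^ 2), q.2.2) ∈ Ω}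

open Real Set

lemma det_prodMap_id (M : (ℝ×ℝ) →L[ℝ] (ℝ×ℝ)) :
    (M.prodMap (ContinuousLinearMap.id ℝ ℝ)).det = M.det := by
  have h : (M.prodMap (ContinuousLinearMap.id ℝ ℝ) : ((ℝ×ℝ)×ℝ) →ₗ[ℝ] ((ℝ×ℝ)×ℝ))
      = (M : (ℝ×ℝ) →ₗ[ℝ] (ℝ×ℝ)).prodMap (LinearMap.id) := rfl
  show LinearMap.det _ = LinearMap.det _
  rw [h, ← LinearMap.det_toMatrix ((Module.Basis.finTwoProd ℝ).prod (Module.Basis.singleton (Fin 1) ℝ)),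
    LinearMap.toMatrix_prodMap, Matrix.det_fromBlocks_zero₂₁,
    LinearMap.det_toMatrix, LinearMap.det_toMatrix, LinearMap.det_id, mul_one]

lemma sqrt_polar (r θ : ℝ) (hr : 0 ≤ r) :
    Real.sqrt ((r * Real.cos θ)^2 + (r * Real.sin θ)^2) = r := by
  rw [show (r * Real.cos θ)^2 + (r * Real.sin θ)^2 = r^2 by
    rw [mul_pow, mul_pow, ← mul_add, Real.cos_sq_add_sin_sq, mul_one], Real.sqrt_sq hr]

instance : Measure.IsAddHaarMeasure (volume : Measure ((ℝ×ℝ)×ℝ)) :=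
  Measure.prod.instIsAddHaarMeasure _ _

lemma clm2_apply (A : (ℝ×ℝ) →L[ℝ] ℝ) (c d : ℝ) : A (c, d) = c * A (1,0) + d * A (0,1) := by
  have h : ((c, d) : ℝ × ℝ) = c • ((1:ℝ),(0:ℝ)) + d • ((0:ℝ),(1:ℝ)) := by simp [Prod.ext_iff]
  rw [h, map_add, A.map_smul, A.map_smul, smul_eq_mul, smul_eq_mul]

lemma div3_revolve (vr vz : ℝ × ℝ → ℝ)
    (hv : ContDiffOn ℝ 1 (fun p => (vr p, vz p)) {p : ℝ × ℝ | 0 < p.1})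
    (w : ℝ × ℝ × ℝ) (hw : 0 < Real.sqrt (w.1^2 + w.2.1^2)) :
    div3 (revolve vr vz) w
      = (1 / Real.sqrt (w.1^2+w.2.1^2)) *
        (pdr (fun s => s.1 * vr s) (Real.sqrt (w.1^2+w.2.1^2), w.2.2)
         + pdz (fun s => s.1 * vz s) (Real.sqrt (w.1^2+w.2.1^2), w.2.2)) := by
  have hsum : 0 < w.1^2 + w.2.1^2 := by
    rcases lt_or_ge 0 (w.1^2 + w.2.1^2) with h | h
    · exact h
    · simp [Real.sqrt_eq_zero_of_nonpos h] at hw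
  have hr := hw
  have hr2 : (Real.sqrt (w.1^2 + w.2.1^2))^2 = w.1^2 + w.2.1^2 := Real.sq_sqrt hsum.le
  -- differentiability of vr, vz at p := (r, z)
  have hopen : IsOpen {p : ℝ × ℝ | 0 < p.1} := isOpen_lt continuous_const continuous_fst
  have hp : (Real.sqrt (w.1^2 + w.2.1^2), w.2.2) ∈ {p : ℝ × ℝ | 0 < p.1} := hw
  have hd : DifferentiableAt ℝ (fun p => (vr p, vz p)) (Real.sqrt (w.1^2 + w.2.1^2), w.2.2) :=
    (hv.contDiffAt (hopen.mem_nhds hp)).differentiableAt one_ne_zero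
  have hvr : DifferentiableAt ℝ vr (Real.sqrt (w.1^2 + w.2.1^2), w.2.2) := by
    simpa using hd.fst
  have hvz : DifferentiableAt ℝ vz (Real.sqrt (w.1^2 + w.2.1^2), w.2.2) := by
    simpa using hd.snd
  have hA : HasFDerivAt vr (fderiv ℝ vr (Real.sqrt (w.1^2 + w.2.1^2), w.2.2)) _ := hvr.hasFDerivAt
  have hB : HasFDerivAt vz (fderiv ℝ vz (Real.sqrt (w.1^2 + w.2.1^2), w.2.2)) _ := hvz.hasFDerivAt
  -- derivative of s ↦ s.1^2 + s.2.1^2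
  have hfe : (fun s : ℝ × ℝ × ℝ => s.1*s.1 + s.2.1*s.2.1) = (fun s : ℝ × ℝ × ℝ => s.1^2 + s.2.1^2) := by
    funext s; ring
  have h1 := (((hasFDerivAt_fst (𝕜 := ℝ) (p := w)).mul (hasFDerivAt_fst (𝕜 := ℝ) (p := w))).add
      (((hasFDerivAt_snd (𝕜 := ℝ) (p := w)).fst).mul ((hasFDerivAt_snd (𝕜 := ℝ) (p := w)).fst)))
  replace h1 : HasFDerivAt (fun s : ℝ × ℝ × ℝ => s.1*s.1 + s.2.1*s.2.1) _ w := h1; rw [hfe] at h1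
  have hn : HasFDerivAt (fun s : ℝ × ℝ × ℝ => Real.sqrt (s.1^2 + s.2.1^2)) _ w :=
    (Real.hasDerivAt_sqrt hsum.ne').comp_hasFDerivAt w h1
  have hz3 : HasFDerivAt (fun s : ℝ × ℝ × ℝ => s.2.2) _ w := (hasFDerivAt_snd (𝕜 := ℝ) (p := w)).snd
  have hg : HasFDerivAt (fun s : ℝ × ℝ × ℝ => (Real.sqrt (s.1^2 + s.2.1^2), s.2.2)) _ w :=
    hn.prodMk hz3
  have hcr : HasFDerivAt (fun s : ℝ × ℝ × ℝ => vr (Real.sqrt (s.1^2 + s.2.1^2), s.2.2)) _ w :=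
    hA.comp w hg
  have hcz : HasFDerivAt (fun s : ℝ × ℝ × ℝ => vz (Real.sqrt (s.1^2 + s.2.1^2), s.2.2)) _ w :=
    hB.comp w hg
  have hinv := (hasFDerivAt_inv' (𝕜 := ℝ) (x := Real.sqrt (w.1^2 + w.2.1^2)) hr.ne').comp w hn
  simp only [Function.comp_def] at hinv
  have hf1 := (hcr.mul (hasFDerivAt_fst (𝕜 := ℝ) (p := w))).mul hinv
  have hf2 := (hcr.mul (hasFDerivAt_snd (𝕜 := ℝ) (p := w)).fst).mul hinv
  replace hf1 : HasFDerivAt (fun s : ℝ × ℝ × ℝ => vr (Real.sqrt (s.1^2 + s.2.1^2), s.2.2) * s.1 * (Real.sqrt (s.1^2 + s.2.1^2))⁻¹) _ w := hf1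
  replace hf2 : HasFDerivAt (fun s : ℝ × ℝ × ℝ => vr (Real.sqrt (s.1^2 + s.2.1^2), s.2.2) * s.2.1 * (Real.sqrt (s.1^2 + s.2.1^2))⁻¹) _ w := hf2
  have hrv : HasFDerivAt (fun s : ℝ × ℝ => s.1 * vr s) _ (Real.sqrt (w.1^2 + w.2.1^2), w.2.2) :=
    (hasFDerivAt_fst (𝕜 := ℝ) (p := (Real.sqrt (w.1^2 + w.2.1^2), w.2.2))).mul hA
  have hrz : HasFDerivAt (fun s : ℝ × ℝ => s.1 * vz s) _ (Real.sqrt (w.1^2 + w.2.1^2), w.2.2) :=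
    (hasFDerivAt_fst (𝕜 := ℝ) (p := (Real.sqrt (w.1^2 + w.2.1^2), w.2.2))).mul hB
  rw [div3, pdx3, pdy3, pdz3, pdr, pdz]
  simp only [revolve, div_eq_mul_inv]
  rw [hf1.fderiv, hf2.fderiv, hcz.fderiv, hrv.fderiv, hrz.fderiv]
  simp only [ContinuousLinearMap.add_apply, ContinuousLinearMap.smul_apply,
    ContinuousLinearMap.sub_apply, ContinuousLinearMap.comp_apply,
    ContinuousLinearMap.prod_apply, ContinuousLinearMap.coe_fst', ContinuousLinearMap.coe_snd',
    ContinuousLinearMap.smulRight_apply, ContinuousLinearMap.one_apply,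
    ContinuousLinearMap.neg_apply, ContinuousLinearMap.mulLeftRight_apply, smul_eq_mul, Pi.mul_apply]
  have e1 : ∀ c : ℝ, (fderiv ℝ vr (Real.sqrt (w.1^2 + w.2.1^2), w.2.2)) (c, 0)
      = c * (fderiv ℝ vr (Real.sqrt (w.1^2 + w.2.1^2), w.2.2)) (1, 0) := by
    intro c; rw [clm2_apply]; ring
  have e2 : ∀ c : ℝ, (fderiv ℝ vz (Real.sqrt (w.1^2 + w.2.1^2), w.2.2)) (c, 1)
      = c * (fderiv ℝ vz (Real.sqrt (w.1^2 + w.2.1^2), w.2.2)) (1, 0)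
        + (fderiv ℝ vz (Real.sqrt (w.1^2 + w.2.1^2), w.2.2)) (0, 1) := by
    intro c; rw [clm2_apply]; ring_nf
  rw [e2 (1 / (2 * Real.sqrt (w.1^2 + w.2.1^2)) * (w.1 * 0 + w.1 * 0 + (w.2.1 * 0 + w.2.1 * 0)))]
  rw [e1 (1 / (2 * Real.sqrt (w.1^2 + w.2.1^2)) * (w.1 * 1 + w.1 * 1 + (w.2.1 * 0 + w.2.1 * 0)))]
  rw [e1 (1 / (2 * Real.sqrt (w.1^2 + w.2.1^2)) * (w.1 * 0 + w.1 * 0 + (w.2.1 * 1 + w.2.1 * 1)))]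
  generalize (fderiv ℝ vr (Real.sqrt (w.1^2 + w.2.1^2), w.2.2)) (1, 0) = ar
  generalize (fderiv ℝ vz (Real.sqrt (w.1^2 + w.2.1^2), w.2.2)) (1, 0) = br
  generalize (fderiv ℝ vz (Real.sqrt (w.1^2 + w.2.1^2), w.2.2)) (0, 1) = bz
  generalize hV : vr (Real.sqrt (w.1^2 + w.2.1^2), w.2.2) = V
  generalize hVz : vz (Real.sqrt (w.1^2 + w.2.1^2), w.2.2) = Vz
  generalize hR : Real.sqrt (w.1^2 + w.2.1^2) = r at hr hr2 ⊢
  field_simp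
  linear_combination (2*V - 2*r*ar) * hr2

theorem main_integrals (Ω : Set (ℝ × ℝ)) (hΩm : MeasurableSet Ω)
    (hΩ : Ω ⊆ {p : ℝ × ℝ | 0 < p.1}) (f : ℝ × ℝ → ℝ)
    (hf0 : ∀ p ∉ Ω, f p = 0) :
    ∫ u in ((polarCoord.target ×ˢ (univ : Set ℝ)) ∩ {u : (ℝ×ℝ)×ℝ | (u.1.1, u.2) ∈ Ω}),
        f (u.1.1, u.2) = (2 * Real.pi) * ∫ p in Ω, f p := by
  set S : Set ((ℝ×ℝ)×ℝ) :=
    (polarCoord.target ×ˢ (univ : Set ℝ)) ∩ {u : (ℝ×ℝ)×ℝ | (u.1.1, u.2) ∈ Ω} with hS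
  have hSm : MeasurableSet S :=
    (polarCoord.open_target.measurableSet.prod MeasurableSet.univ).inter
      (hΩm.preimage ((measurable_fst.fst).prodMk measurable_snd))
  set g : ℝ → ℝ := (Set.Ioo (-Real.pi) Real.pi).indicator (fun _ => (1:ℝ)) with hg
  have hpt : ∀ u : (ℝ×ℝ)×ℝ, S.indicator (fun u => f (u.1.1, u.2)) u
      = f (u.1.1, u.2) * g u.1.2 := by
    intro u
    by_cases hu : u ∈ S
    · rw [Set.indicator_of_mem hu, hg, Set.indicator_of_mem, mul_one]
      have := hu.1.1
      rw [polarCoord_target] at this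
      exact this.2
    · rw [Set.indicator_of_notMem hu]
      by_cases hθ : u.1.2 ∈ Set.Ioo (-Real.pi) Real.pi
      · by_cases hin : (u.1.1, u.2) ∈ Ω
        · exfalso
          refine hu ⟨⟨?_, trivial⟩, hin⟩
          have h0 := hΩ hin
          rw [polarCoord_target]
          exact ⟨h0, hθ⟩
        · rw [hf0 _ hin, zero_mul]
      · rw [hg, Set.indicator_of_notMem hθ, mul_zero]
  set E : ((ℝ×ℝ)×ℝ) ≃ᵐ ((ℝ×ℝ)×ℝ) := MeasurableEquiv.prodAssoc.trans
    (((MeasurableEquiv.refl ℝ).prodCongr MeasurableEquiv.prodComm).trans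
      MeasurableEquiv.prodAssoc.symm) with hE
  have m1 : MeasurePreserving (MeasurableEquiv.prodAssoc : (ℝ×ℝ)×ℝ ≃ᵐ ℝ×ℝ×ℝ) volume volume :=
    volume_preserving_prodAssoc
  have m2 : MeasurePreserving
      (Prod.map (id : ℝ → ℝ) (Prod.swap : ℝ×ℝ → ℝ×ℝ)) (volume : Measure (ℝ×(ℝ×ℝ)))
      (volume : Measure (ℝ×(ℝ×ℝ))) :=
    (MeasurePreserving.id volume).prod (Measure.measurePreserving_swap)
  have m3 : MeasurePreserving (MeasurableEquiv.prodAssoc.symm : ℝ×ℝ×ℝ ≃ᵐ (ℝ×ℝ)×ℝ)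
      volume volume := m1.symm _
  have mE : MeasurePreserving (⇑E) volume volume := (m3.comp m2).comp m1
  calc ∫ u in S, f (u.1.1, u.2)
      = ∫ u : (ℝ×ℝ)×ℝ, S.indicator (fun u => f (u.1.1, u.2)) u := (integral_indicator hSm).symm
    _ = ∫ u : (ℝ×ℝ)×ℝ, f (u.1.1, u.2) * g u.1.2 := by
        congr 1; funext u; exact hpt u
    _ = ∫ u : (ℝ×ℝ)×ℝ, (fun v : (ℝ×ℝ)×ℝ => f v.1 * g v.2) (E u) := rfl
    _ = ∫ v : (ℝ×ℝ)×ℝ, f v.1 * g v.2 :=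
        mE.integral_comp E.measurableEmbedding (fun v : (ℝ×ℝ)×ℝ => f v.1 * g v.2)
    _ = (∫ p, f p) * ∫ θ, g θ := by
        rw [MeasureTheory.Measure.volume_eq_prod]
        exact integral_prod_mul f g
    _ = (2 * Real.pi) * ∫ p in Ω, f p := by
        rw [hg, integral_indicator measurableSet_Ioo]
        simp only [integral_const, MeasurableSet.univ, Measure.restrict_apply, Set.univ_inter,
          Real.volume_Ioo, smul_eq_mul, mul_one]
        rw [measureReal_def, Measure.restrict_apply MeasurableSet.univ, Set.univ_inter, Real.volume_Ioo, ENNReal.toReal_ofReal (by linarith [Real.pi_pos] : (0:ℝ) ≤ Real.pi - -Real.pi)]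
        rw [← integral_indicator hΩm]
        have : (fun p => Set.indicator Ω f p) = f := by
          funext p
          by_cases hp : p ∈ Ω
          · rw [Set.indicator_of_mem hp]
          · rw [Set.indicator_of_notMem hp, hf0 _ hp]
        rw [this]
        ring


/-- `∫_{Ω̂} q̂ · div v̂ = 2π ∫_Ω q · (∂_r (r v_r) + ∂_z (r v_z))`, i.e. the
three-dimensional pressure-divergence pairing of the revolved data equals `2π` times the
axisymmetric bilinear form `b(q, v) = ∫_Ω q · div(r v)`. -/
theorem integral_pressure_div_revolved
    (Ω : Set (ℝ × ℝ)) (hΩm : MeasurableSet Ω) (hΩ : Ω ⊆ {p : ℝ × ℝ | 0 < p.1})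
    (vr vz : ℝ × ℝ → ℝ)
    (hv : ContDiffOn ℝ 1 (fun p => (vr p, vz p)) {p : ℝ × ℝ | 0 < p.1})
    (q : ℝ × ℝ → ℝ) (hq : Measurable q)
    (hint : IntegrableOn
      (fun p : ℝ × ℝ => |q p| *
        |pdr (fun s => s.1 * vr s) p + pdz (fun s => s.1 * vz s) p|) Ω volume) :
    ∫ w in solidRev Ω, q (Real.sqrt (w.1 ^ 2 + w.2.1 ^ 2), w.2.2) * div3 (revolve vr vz) w
      = (2 * Real.pi) *
        ∫ p in Ω, q p * (pdr (fun s => s.1 * vr s) p + pdz (fun s => s.1 * vz s) p) := by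
  classical
  set D : ℝ × ℝ → ℝ := fun p => pdr (fun s => s.1 * vr s) p + pdz (fun s => s.1 * vz s) p with hD
  set f : ℝ × ℝ → ℝ := Ω.indicator (fun p => q p * D p) with hf
  have hf0 : ∀ p ∉ Ω, f p = 0 := fun p hp => Set.indicator_of_notMem hp _
  set G3 : ℝ × ℝ × ℝ → ℝ :=
    fun w => q (Real.sqrt (w.1 ^ 2 + w.2.1 ^ 2), w.2.2) * div3 (revolve vr vz) w with hG3
  set S : Set ((ℝ×ℝ)×ℝ) :=
    (polarCoord.target ×ˢ (univ : Set ℝ)) ∩ {u : (ℝ×ℝ)×ℝ | (u.1.1, u.2) ∈ Ω} with hS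
  have hSm : MeasurableSet S :=
    (polarCoord.open_target.measurableSet.prod MeasurableSet.univ).inter
      (hΩm.preimage ((measurable_fst.fst).prodMk measurable_snd))
  have m1 : MeasurePreserving (MeasurableEquiv.prodAssoc : (ℝ×ℝ)×ℝ ≃ᵐ ℝ×ℝ×ℝ) volume volume :=
    volume_preserving_prodAssoc
  set T : Set ((ℝ×ℝ)×ℝ) := MeasurableEquiv.prodAssoc ⁻¹' solidRev Ω with hT
  have hTmem : ∀ u : (ℝ×ℝ)×ℝ, u ∈ T ↔ (Real.sqrt (u.1.1^2 + u.1.2^2), u.2) ∈ Ω :=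
    fun u => Iff.rfl
  set Ψ : (ℝ×ℝ)×ℝ → (ℝ×ℝ)×ℝ := fun u => (polarCoord.symm u.1, u.2) with hΨ
  set B' : ℝ×ℝ → ((ℝ×ℝ) →L[ℝ] (ℝ×ℝ)) := fun p =>
    LinearMap.toContinuousLinearMap (Matrix.toLin (Module.Basis.finTwoProd ℝ) (Module.Basis.finTwoProd ℝ)
      !![Real.cos p.2, -p.1 * Real.sin p.2; Real.sin p.2, p.1 * Real.cos p.2]) with hB'
  set Ψ' : (ℝ×ℝ)×ℝ → (((ℝ×ℝ)×ℝ) →L[ℝ] ((ℝ×ℝ)×ℝ)) :=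
    fun u => (B' u.1).prodMap (ContinuousLinearMap.id ℝ ℝ) with hΨ'
  have hBdet : ∀ p : ℝ×ℝ, (B' p).det = p.1 := by
    intro p
    conv_rhs => rw [← one_mul p.1, ← Real.cos_sq_add_sin_sq p.2]
    simp only [hB', neg_mul, LinearMap.det_toContinuousLinearMap, LinearMap.det_toLin,
      Matrix.det_fin_two_of, sub_neg_eq_add]
    ring
  have hΨd : ∀ u ∈ S, HasFDerivWithinAt Ψ (Ψ' u) S u := fun u _ =>
    (HasFDerivAt.prodMap u (hasFDerivAt_polarCoord_symm u.1)
      (hasFDerivAt_id u.2)).hasFDerivWithinAt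
  have hinj : Set.InjOn Ψ S := by
    intro a ha b hb h
    have h1 : (Ψ a).1 = (Ψ b).1 := congrArg Prod.fst h
    have ha1 : a.1 ∈ polarCoord.symm.source := by
      rw [OpenPartialHomeomorph.symm_source]; exact ha.1.1
    have hb1 : b.1 ∈ polarCoord.symm.source := by
      rw [OpenPartialHomeomorph.symm_source]; exact hb.1.1
    have h2 : (Ψ a).2 = (Ψ b).2 := congrArg Prod.snd h
    exact Prod.ext (polarCoord.symm.injOn ha1 hb1 h1) h2
  have himg : Ψ '' S = T ∩ (polarCoord.source ×ˢ (univ : Set ℝ)) := by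
    ext u
    constructor
    · rintro ⟨v, ⟨⟨hvt, -⟩, hvΩ⟩, rfl⟩
      have hvt' := hvt
      rw [polarCoord_target] at hvt'
      have hr : 0 < v.1.1 := hvt'.1
      refine ⟨?_, polarCoord.map_target hvt, trivial⟩
      rw [hTmem]
      show (Real.sqrt ((polarCoord.symm v.1).1 ^ 2 + (polarCoord.symm v.1).2 ^ 2), v.2) ∈ Ω
      rw [polarCoord_symm_apply]
      simpa [sqrt_polar _ _ hr.le] using hvΩ
    · rintro ⟨huT, husrc, -⟩
      refine ⟨((polarCoord u.1), u.2), ⟨⟨polarCoord.map_source husrc, trivial⟩, ?_⟩, ?_⟩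
      · show ((polarCoord u.1).1, u.2) ∈ Ω
        rw [polarCoord_apply]
        exact (hTmem u).1 huT
      · show (polarCoord.symm (polarCoord u.1), u.2) = u
        exact Prod.ext (polarCoord.left_inv husrc) rfl
  have hsrc_null : volume (polarCoord.sourceᶜ) = 0 := by
    have h := polarCoord_source_ae_eq_univ
    rwa [MeasureTheory.ae_eq_univ] at h
  have hnull : volume ((polarCoord.sourceᶜ) ×ˢ (univ : Set ℝ)) = 0 := by
    rw [MeasureTheory.Measure.volume_eq_prod, Measure.prod_prod, hsrc_null, zero_mul]
  have hTae : T =ᵐ[volume] Ψ '' S := by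
    rw [himg]
    refine MeasureTheory.ae_eq_set.2 ⟨?_, ?_⟩
    · refine measure_mono_null ?_ hnull
      rintro u ⟨huT, hun⟩
      refine ⟨?_, trivial⟩
      intro hus
      exact hun ⟨huT, hus, trivial⟩
    · refine measure_mono_null (t := (∅ : Set ((ℝ×ℝ)×ℝ))) ?_ measure_empty
      rintro u ⟨⟨h1, -⟩, h2⟩
      exact h2 h1
  have hstep : ∀ u ∈ S, |(Ψ' u).det| • G3 (MeasurableEquiv.prodAssoc (Ψ u)) = f (u.1.1, u.2) := by
    intro u hu
    have hut := hu.1.1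
    rw [polarCoord_target] at hut
    have hr : 0 < u.1.1 := hut.1
    have hdet : (Ψ' u).det = u.1.1 := by rw [hΨ', det_prodMap_id, hBdet]
    have hΨu : MeasurableEquiv.prodAssoc (Ψ u)
        = (u.1.1 * Real.cos u.1.2, u.1.1 * Real.sin u.1.2, u.2) := by
      show (((polarCoord.symm u.1).1, (polarCoord.symm u.1).2, u.2) : ℝ × ℝ × ℝ) = _
      rw [polarCoord_symm_apply]
    rw [hdet, hΨu, abs_of_pos hr, smul_eq_mul]
    have hw : 0 < Real.sqrt ((u.1.1 * Real.cos u.1.2)^2 + (u.1.1 * Real.sin u.1.2)^2) := by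
      rw [sqrt_polar _ _ hr.le]; exact hr
    rw [hG3]
    simp only
    rw [div3_revolve vr vz hv (u.1.1 * Real.cos u.1.2, u.1.1 * Real.sin u.1.2, u.2) hw]
    simp only
    rw [sqrt_polar _ _ hr.le]
    rw [hf, Set.indicator_of_mem (show (u.1.1, u.2) ∈ Ω from hu.2)]
    simp only [hD]
    field_simp
  calc ∫ w in solidRev Ω, q (Real.sqrt (w.1 ^ 2 + w.2.1 ^ 2), w.2.2) * div3 (revolve vr vz) w
      = ∫ u in T, G3 (MeasurableEquiv.prodAssoc u) :=
        (m1.setIntegral_preimage_emb MeasurableEquiv.prodAssoc.measurableEmbedding G3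
          (solidRev Ω)).symm
    _ = ∫ u in Ψ '' S, G3 (MeasurableEquiv.prodAssoc u) := setIntegral_congr_set hTae
    _ = ∫ u in S, |(Ψ' u).det| • G3 (MeasurableEquiv.prodAssoc (Ψ u)) :=
        integral_image_eq_integral_abs_det_fderiv_smul volume hSm hΨd hinj _
    _ = ∫ u in S, f (u.1.1, u.2) := setIntegral_congr_fun hSm hstep
    _ = (2 * Real.pi) * ∫ p in Ω, f p := main_integrals Ω hΩm hΩ f hf0
    _ = (2 * Real.pi) * ∫ p in Ω, q p * D p := by
        congr 1
        refine setIntegral_congr_fun hΩm (fun p hp => ?_)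
        rw [hf, Set.indicator_of_mem hp]
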